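/- If a Banach space X is octahedral, then for every finite-dimensional subspace E of X, every x₁*,...,xₙ* ∈ B_{X*}, every ε > 0 and 0 < ε₀ < ε, there exists y ∈ S_X such that whenever |γᵢ| ≤ 1 + ε₀ there exist yᵢ* ∈ X* with ‖yᵢ*‖ ≤ 1 + ε, yᵢ*|_E = xᵢ*|_E and yᵢ*(y) = γᵢ for all i. -/

import Mathlib

open Filter Topology

noncomputable section

/-- A Banach space is octahedral (OH). -/
def IsOctahedral (Z : Type*) [NormedAddCommGroup Z] : Prop :=
  ∀ (n : ℕ) (z : Fin n → Z), (∀ i, ‖z i‖ = 1) → ∀ ε : ℝ, 0 < ε →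
    ∃ w : Z, ‖w‖ = 1 ∧ ∀ i, ‖z i + w‖ > 2 - ε

/-- Locally octahedral (LOH). -/
def IsLocallyOctahedral (Z : Type*) [NormedAddCommGroup Z] : Prop :=
  ∀ z : Z, ‖z‖ = 1 → ∀ ε : ℝ, 0 < ε →
    ∃ w : Z, ‖w‖ = 1 ∧ ‖z + w‖ > 2 - ε ∧ ‖z - w‖ > 2 - ε

/-- Weakly octahedral (WOH). -/
def IsWeaklyOctahedral (X : Type*) [NormedAddCommGroup X] [NormedSpace ℝ X] : Prop :=
  ∀ (n : ℕ) (z : Fin n → X), (∀ i, ‖z i‖ = 1) → ∀ f : X →L[ℝ] ℝ, ‖f‖ ≤ 1 →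
    ∀ ε : ℝ, 0 < ε → ∃ y : X, ‖y‖ = 1 ∧ ∀ i, ∀ t : ℝ, 0 < t →
      ‖z i + t • y‖ ≥ (1 - ε) * (|f (z i)| + t) ∧
      ‖z i - t • y‖ ≥ (1 - ε) * (|f (z i)| + t)

/-- Almost square (ASQ), sequential formulation. -/
def IsASQ (Z : Type*) [NormedAddCommGroup Z] : Prop :=
  ∀ (n : ℕ) (z : Fin n → Z), (∀ i, ‖z i‖ = 1) →
    ∃ w : ℕ → Z, (∀ k, ‖w k‖ ≤ 1) ∧
      Tendsto (fun k => ‖w k‖) atTop (nhds 1) ∧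
      ∀ i, Tendsto (fun k => ‖z i + w k‖) atTop (nhds 1) ∧
           Tendsto (fun k => ‖z i - w k‖) atTop (nhds 1)

/-- Almost square (ASQ), finite-ε formulation. -/
def IsASQeps (Z : Type*) [NormedAddCommGroup Z] : Prop :=
  ∀ (n : ℕ) (z : Fin n → Z), (∀ i, ‖z i‖ = 1) → ∀ ε : ℝ, 0 < ε →
    ∃ w : Z, ‖w‖ = 1 ∧ ∀ i, ‖z i + w‖ ≤ 1 + ε ∧ ‖z i - w‖ ≤ 1 + ε

/-- Locally almost square (LASQ), sequential formulation. -/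
def IsLASQ (Z : Type*) [NormedAddCommGroup Z] : Prop :=
  ∀ z : Z, ‖z‖ = 1 →
    ∃ w : ℕ → Z, (∀ k, ‖w k‖ ≤ 1) ∧
      Tendsto (fun k => ‖w k‖) atTop (nhds 1) ∧
      Tendsto (fun k => ‖z + w k‖) atTop (nhds 1) ∧
      Tendsto (fun k => ‖z - w k‖) atTop (nhds 1)

/-- Locally almost square (LASQ), ε formulation. -/
def IsLASQeps (Z : Type*) [NormedAddCommGroup Z] : Prop :=
  ∀ z : Z, ‖z‖ = 1 → ∀ ε : ℝ, 0 < ε →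
    ∃ w : Z, ‖w‖ = 1 ∧ ‖z + w‖ ≤ 1 + ε ∧ ‖z - w‖ ≤ 1 + ε

/-- Weakly almost square (WASQ). -/
def IsWASQ (Z : Type*) [NormedAddCommGroup Z] [NormedSpace ℝ Z] : Prop :=
  ∀ z : Z, ‖z‖ = 1 →
    ∃ w : ℕ → Z, (∀ k, ‖w k‖ ≤ 1) ∧
      Tendsto (fun k => ‖w k‖) atTop (nhds 1) ∧
      Tendsto (fun k => ‖z + w k‖) atTop (nhds 1) ∧
      Tendsto (fun k => ‖z - w k‖) atTop (nhds 1) ∧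
      ∀ f : Z →L[ℝ] ℝ, Tendsto (fun k => f (w k)) atTop (nhds 0)

/-- Local diameter two property: every slice of the unit ball has diameter two. -/
def HasLD2P (Z : Type*) [NormedAddCommGroup Z] [NormedSpace ℝ Z] : Prop :=
  ∀ f : Z →L[ℝ] ℝ, ‖f‖ = 1 → ∀ α : ℝ, 0 < α →
    Metric.diam {x : Z | ‖x‖ ≤ 1 ∧ 1 - α < f x} = 2

/-- Diameter two property: every nonempty relatively weakly open subset of the unit
ball has diameter two. -/
def HasD2P (Z : Type*) [NormedAddCommGroup Z] [NormedSpace ℝ Z] : Prop :=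
  ∀ U : Set Z, U.Nonempty → (∀ x ∈ U, ‖x‖ ≤ 1) →
    (∀ x ∈ U, ∃ (n : ℕ) (f : Fin n → Z →L[ℝ] ℝ) (δ : ℝ), 0 < δ ∧
      {y : Z | ‖y‖ ≤ 1 ∧ ∀ i, |f i y - f i x| < δ} ⊆ U) →
    Metric.diam U = 2

/-- The Schur property. -/
def HasSchurProperty (Z : Type*) [SeminormedAddCommGroup Z] [NormedSpace ℝ Z] : Prop :=
  ∀ (u : ℕ → Z) (x : Z),
    (∀ f : Z →L[ℝ] ℝ, Tendsto (fun k => f (u k)) atTop (nhds (f x))) →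
    Tendsto (fun k => ‖u k - x‖) atTop (nhds 0)

/-- The Dunford–Pettis property: every weakly compact operator is
weak-to-norm sequentially continuous. -/
def HasDPP (X : Type*) [NormedAddCommGroup X] [NormedSpace ℝ X] : Prop :=
  ∀ (Y : Type) (_ : NormedAddCommGroup Y) (_ : NormedSpace ℝ Y) (_ : CompleteSpace Y)
    (T : X →L[ℝ] Y),
    (∃ K : Set (WeakSpace ℝ Y), IsCompact K ∧
      ∀ x : X, ‖x‖ ≤ 1 → toWeakSpace ℝ Y (T x) ∈ K) →
    ∀ (u : ℕ → X) (x : X),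
      (∀ f : X →L[ℝ] ℝ, Tendsto (fun k => f (u k)) atTop (nhds (f x))) →
      Tendsto (fun k => ‖T (u k) - T x‖) atTop (nhds 0)

/-- `Z`, together with the bilinear-type map `t`, is (a realization of) the injective
tensor product `X ⊗̂_ε Y`: the span of elementary tensors is dense and the norm of any
linear combination of elementary tensors is given by the injective tensor norm. -/
def IsInjTensorProduct (X Y Z : Type*) [NormedAddCommGroup X] [NormedSpace ℝ X]
    [NormedAddCommGroup Y] [NormedSpace ℝ Y] [NormedAddCommGroup Z] [NormedSpace ℝ Z]
    (t : X → Y → Z) : Prop :=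
  (Submodule.span ℝ (Set.range fun p : X × Y => t p.1 p.2)).topologicalClosure = ⊤ ∧
  ∀ l : List (X × Y),
    ‖(l.map fun p => t p.1 p.2).sum‖ =
      sSup {s : ℝ | ∃ (f : X →L[ℝ] ℝ) (g : Y →L[ℝ] ℝ), ‖f‖ ≤ 1 ∧ ‖g‖ ≤ 1 ∧
        s = |(l.map fun p => f p.1 * g p.2).sum|}

/-- `Z`, together with the map `t`, is (a realization of) the projective tensor product
`X ⊗̂_π Y`: the span of elementary tensors is dense and the norm of any combination of
elementary tensors is the infimum of `Σ ‖xᵢ‖‖yᵢ‖` over all representations (two formal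
combinations represent the same tensor iff they agree against all pairs of functionals). -/
def IsProjTensorProduct (X Y Z : Type*) [NormedAddCommGroup X] [NormedSpace ℝ X]
    [NormedAddCommGroup Y] [NormedSpace ℝ Y] [NormedAddCommGroup Z] [NormedSpace ℝ Z]
    (t : X → Y → Z) : Prop :=
  (Submodule.span ℝ (Set.range fun p : X × Y => t p.1 p.2)).topologicalClosure = ⊤ ∧
  ∀ l : List (X × Y),
    ‖(l.map fun p => t p.1 p.2).sum‖ =
      sInf {s : ℝ | ∃ l' : List (X × Y),
        (∀ (f : X →L[ℝ] ℝ) (g : Y →L[ℝ] ℝ),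
          (l'.map fun p => f p.1 * g p.2).sum = (l.map fun p => f p.1 * g p.2).sum) ∧
        s = (l'.map fun p => ‖p.1‖ * ‖p.2‖).sum}

/-- `Z`, together with the diagonal map `δ : x ↦ x^N`, is (a realization of) the `N`-fold
injective symmetric tensor product `⊗̂_{ε,s,N} X`. -/
def IsInjSymTensorProduct (X : Type*) [NormedAddCommGroup X] [NormedSpace ℝ X] (N : ℕ)
    (Z : Type*) [NormedAddCommGroup Z] [NormedSpace ℝ Z] (δ : X → Z) : Prop :=
  (Submodule.span ℝ (Set.range δ)).topologicalClosure = ⊤ ∧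
  ∀ l : List (ℝ × X),
    ‖(l.map fun p => p.1 • δ p.2).sum‖ =
      sSup {s : ℝ | ∃ f : X →L[ℝ] ℝ, ‖f‖ ≤ 1 ∧
        s = |(l.map fun p => p.1 * (f p.2) ^ N).sum|}

/-- `Z`, together with the diagonal map `δ : x ↦ x^N`, is (a realization of) the `N`-fold
projective symmetric tensor product `⊗̂_{π,s,N} X`. -/
def IsProjSymTensorProduct (X : Type*) [NormedAddCommGroup X] [NormedSpace ℝ X] (N : ℕ)
    (Z : Type*) [NormedAddCommGroup Z] [NormedSpace ℝ Z] (δ : X → Z) : Prop :=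
  (Submodule.span ℝ (Set.range δ)).topologicalClosure = ⊤ ∧
  ∀ l : List (ℝ × X),
    ‖(l.map fun p => p.1 • δ p.2).sum‖ =
      sInf {s : ℝ | ∃ l' : List (ℝ × X),
        (∀ f : X →L[ℝ] ℝ,
          (l'.map fun p => p.1 * (f p.2) ^ N).sum = (l.map fun p => p.1 * (f p.2) ^ N).sum) ∧
        s = (l'.map fun p => |p.1| * ‖p.2‖ ^ N).sum}

/-- An operator `T : X* → Y` is weak*-to-weakly continuous. -/
def WeakStarToWeakContinuous {X Y : Type*} [NormedAddCommGroup X] [NormedSpace ℝ X]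
    [NormedAddCommGroup Y] [NormedSpace ℝ Y] (T : (X →L[ℝ] ℝ) →L[ℝ] Y) : Prop :=
  ∀ g : Y →L[ℝ] ℝ, Continuous fun f : WeakDual ℝ X => g (T f)

/-- The elementary tensor `x ⊗ y` regarded as the operator `x* ↦ x*(x) • y` in `L(X*, Y)`. -/
def elemTensor {X Y : Type*} [NormedAddCommGroup X] [NormedSpace ℝ X]
    [NormedAddCommGroup Y] [NormedSpace ℝ Y] (x : X) (y : Y) : (X →L[ℝ] ℝ) →L[ℝ] Y :=
  (ContinuousLinearMap.apply ℝ ℝ x).smulRight y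

/-- `n(Z, u) = 1`, i.e. `D(Z,u) = {f ∈ B_{Z*} : f(u) = 1}` is a norming set for `Z`. -/
def NormOneUnitary (Z : Type*) [NormedAddCommGroup Z] [NormedSpace ℝ Z] (u : Z) : Prop :=
  ‖u‖ = 1 ∧ ∀ z : Z, ‖z‖ ≤ sSup {r : ℝ | ∃ g : Z →L[ℝ] ℝ, ‖g‖ ≤ 1 ∧ g u = 1 ∧ r = |g z|}

/-- Asplund space: every closed separable subspace has separable dual. -/
def IsAsplund (Y : Type*) [NormedAddCommGroup Y] [NormedSpace ℝ Y] : Prop :=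
  ∀ S : Submodule ℝ Y, IsClosed (S : Set Y) → TopologicalSpace.SeparableSpace S →
    TopologicalSpace.SeparableSpace ((↥S) →L[ℝ] ℝ)

/-- The (metric) approximation-type property: finite-rank operators approximate the
identity uniformly on compact sets. -/
def HasAP (E : Type*) [NormedAddCommGroup E] [NormedSpace ℝ E] : Prop :=
  ∀ K : Set E, IsCompact K → ∀ ε : ℝ, 0 < ε →
    ∃ T : E →L[ℝ] E, FiniteDimensional ℝ (LinearMap.range (T : E →ₗ[ℝ] E)) ∧
      ∀ x ∈ K, ‖T x - x‖ ≤ ε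

end

set_option maxHeartbeats 1000000

lemma aux_sep {X : Type*} [NormedAddCommGroup X] [NormedSpace ℝ X]
    (E : Submodule ℝ X) (hEc : IsClosed (E : Set X)) {y : X} (hy : y ∉ E) :
    ∃ h : X →L[ℝ] ℝ, (∀ e ∈ E, h e = 0) ∧ h y = 1 := by
  obtain ⟨f, u, hfu, huy⟩ := geometric_hahn_banach_closed_point E.convex hEc hy
  have hE0 : ∀ e ∈ E, f e = 0 := by
    intro e he
    by_contra h0
    have ht : ∀ t : ℝ, t * f e < u := by
      intro t
      have := hfu (t • e) (E.smul_mem t he)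
      simpa using this
    have h1 := ht ((|u| + 1) / f e)
    rw [div_mul_cancel₀ _ h0] at h1
    have := le_abs_self u
    linarith
  have hu0 : 0 < u := by simpa using hfu 0 E.zero_mem
  have hfy : f y ≠ 0 := (hu0.trans huy).ne'
  refine ⟨(f y)⁻¹ • f, fun e he => ?_, ?_⟩
  · simp [hE0 e he]
  · simp [inv_mul_cancel₀ hfy]

theorem statement0 (X : Type*) [NormedAddCommGroup X] [NormedSpace ℝ X] [CompleteSpace X]
    (hX : IsOctahedral X) :
    ∀ E : Submodule ℝ X, FiniteDimensional ℝ E →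
    ∀ (n : ℕ) (x' : Fin n → X →L[ℝ] ℝ), (∀ i, ‖x' i‖ ≤ 1) →
    ∀ ε ε₀ : ℝ, 0 < ε₀ → ε₀ < ε →
    ∃ y : X, ‖y‖ = 1 ∧ ∀ γ : Fin n → ℝ, (∀ i, |γ i| ≤ 1 + ε₀) →
      ∃ y' : Fin n → X →L[ℝ] ℝ, ∀ i,
        ‖y' i‖ ≤ 1 + ε ∧ (∀ e ∈ E, y' i e = x' i e) ∧ y' i y = γ i := by
  intro E hE n x' hx' ε ε₀ hε₀ hεε
  haveI := hE
  have hε : 0 < ε := hε₀.trans hεε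
  set δ : ℝ := (ε - ε₀) / (1 + ε) with hδdef
  have hδ0 : 0 < δ := div_pos (by linarith) (by linarith)
  have hδ1 : δ < 1 := by rw [hδdef, div_lt_one (by linarith)]; linarith
  have hδε : (1 + ε) * (1 - δ) = 1 + ε₀ := by
    field_simp [hδdef]
    have hd : δ * (1 + ε) = ε - ε₀ := by rw [hδdef]; exact div_mul_cancel₀ _ (by linarith)
    linarith
  -- finite net of the sphere of E
  have hsc : IsCompact (Metric.sphere (0:E) 1) := isCompact_sphere 0 1
  obtain ⟨t, hts, htfin, htcov⟩ :=
    totallyBounded_iff_subset.mp hsc.totallyBounded _ (Metric.dist_mem_uniformity (half_pos hδ0))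
  classical
  obtain ⟨L, hLmem⟩ : ∃ L : List E, ∀ c, c ∈ t ↔ c ∈ L :=
    ⟨htfin.toFinset.toList, fun c => by
      rw [Finset.mem_toList, Set.Finite.mem_toFinset]⟩
  let z : Fin L.length → X := fun i => ((L.get i : E) : X)
  have hmemL : ∀ i, L.get i ∈ t := fun i => (hLmem _).mpr (List.get_mem _ _)
  have hznorm : ∀ i, ‖z i‖ = 1 := by
    intro i
    have h := hts (hmemL i)
    rw [mem_sphere_zero_iff_norm] at h
    rw [← Submodule.norm_coe] at h
    exact h
  obtain ⟨y, hy1, hyz⟩ := hX L.length z hznorm (δ/2) (half_pos hδ0)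
  -- everything in the sphere of E is close to the net
  have hclose : ∀ u : X, u ∈ E → ‖u‖ = 1 → 2 - δ < ‖u + y‖ := by
    intro u hu hnu
    have hus : (⟨u, hu⟩ : E) ∈ Metric.sphere (0:E) 1 := by
      rw [mem_sphere_zero_iff_norm, Submodule.coe_norm]
      exact hnu
    obtain ⟨c, hct, hdc⟩ := Set.mem_iUnion₂.mp (htcov hus)
    have hdc' : dist u (c : X) < δ/2 := by
      have : dist (⟨u, hu⟩ : E) c < δ/2 := hdc
      rwa [Subtype.dist_eq] at this
    obtain ⟨j, hj⟩ := List.mem_iff_get.mp ((hLmem c).mp hct)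
    have h1 : 2 - δ/2 < ‖z j + y‖ := hyz j
    have h2 : ‖z j + y‖ ≤ ‖u + y‖ + ‖z j - u‖ := by
      have : z j + y = (u + y) + (z j - u) := by abel
      rw [this]; exact norm_add_le _ _
    have h3 : ‖z j - u‖ < δ/2 := by
      have : z j = (c : X) := by show ((L.get j : E) : X) = c; rw [hj]
      rw [this, ← dist_eq_norm, dist_comm]
      exact hdc'
    linarith
  -- the two claims
  have claim1 : ∀ u : X, u ∈ E → ‖u‖ = 1 → ∀ s : ℝ, 0 ≤ s → s ≤ 1 →
      1 + s - δ ≤ ‖u + s • y‖ := by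
    intro u hu hnu s hs0 hs1
    have h1 : u + y = (u + s • y) + (1 - s) • y := by
      rw [sub_smul, one_smul]; abel
    have h2 : ‖u + y‖ ≤ ‖u + s • y‖ + (1 - s) := by
      calc ‖u + y‖ ≤ ‖u + s • y‖ + ‖(1 - s) • y‖ := h1 ▸ norm_add_le _ _
        _ = ‖u + s • y‖ + (1 - s) := by
            rw [norm_smul, hy1, Real.norm_eq_abs, abs_of_nonneg (by linarith), mul_one]
    have := hclose u hu hnu
    linarith
  have claim2 : ∀ u : X, u ∈ E → ‖u‖ = 1 → ∀ r : ℝ, 0 ≤ r → r ≤ 1 →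
      1 + r - δ ≤ ‖r • u + y‖ := by
    intro u hu hnu r hr0 hr1
    have h1 : u + y = (r • u + y) + (1 - r) • u := by
      rw [sub_smul, one_smul]; abel
    have h2 : ‖u + y‖ ≤ ‖r • u + y‖ + (1 - r) := by
      calc ‖u + y‖ ≤ ‖r • u + y‖ + ‖(1 - r) • u‖ := h1 ▸ norm_add_le _ _
        _ = ‖r • u + y‖ + (1 - r) := by
            rw [norm_smul, hnu, Real.norm_eq_abs, abs_of_nonneg (by linarith), mul_one]
    have := hclose u hu hnu
    linarith
  -- key inequality, nonnegative coefficient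
  have keypos : ∀ u : X, u ∈ E → ∀ s : ℝ, 0 ≤ s → (1 - δ) * (‖u‖ + s) ≤ ‖u + s • y‖ := by
    intro u hu s hs
    rcases eq_or_lt_of_le hs with hs0 | hs0
    · simp only [← hs0, zero_smul, add_zero]
      nlinarith [norm_nonneg u]
    rcases eq_or_ne u 0 with rfl | hu0
    · rw [zero_add, norm_smul, hy1, norm_zero, Real.norm_eq_abs, abs_of_pos hs0, mul_one, zero_add]
      nlinarith
    have ha : 0 < ‖u‖ := norm_pos_iff.mpr hu0
    rcases le_total s ‖u‖ with hcase | hcase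
    · -- scale by ‖u‖
      set a := ‖u‖
      have hun : ‖a⁻¹ • u‖ = 1 := by
        rw [norm_smul, Real.norm_eq_abs, abs_of_pos (inv_pos.mpr ha), inv_mul_cancel₀ ha.ne']
      have hmem : a⁻¹ • u ∈ E := E.smul_mem _ hu
      have hc := claim1 _ hmem hun (s / a) (div_nonneg hs ha.le) ((div_le_one ha).mpr hcase)
      have heq : u + s • y = a • (a⁻¹ • u + (s / a) • y) := by
        match_scalars <;> field_simp
      have hnorm : ‖u + s • y‖ = a * ‖a⁻¹ • u + (s / a) • y‖ := by
        rw [heq, norm_smul, Real.norm_eq_abs, abs_of_pos ha]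
      rw [hnorm]
      have h3 : a * (1 + s / a - δ) ≤ a * ‖a⁻¹ • u + (s / a) • y‖ :=
        mul_le_mul_of_nonneg_left hc ha.le
      have h4 : a * (1 + s / a - δ) = a + s - a * δ := by
        field_simp
      nlinarith
    · -- scale by s
      set a := ‖u‖
      have hun : ‖a⁻¹ • u‖ = 1 := by
        rw [norm_smul, Real.norm_eq_abs, abs_of_pos (inv_pos.mpr ha), inv_mul_cancel₀ ha.ne']
      have hmem : a⁻¹ • u ∈ E := E.smul_mem _ hu
      have hc := claim2 _ hmem hun (a / s) (div_nonneg ha.le hs) ((div_le_one hs0).mpr hcase)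
      have heq : u + s • y = s • ((a / s) • (a⁻¹ • u) + y) := by
        match_scalars <;> field_simp
      have hnorm : ‖u + s • y‖ = s * ‖(a / s) • (a⁻¹ • u) + y‖ := by
        rw [heq, norm_smul, Real.norm_eq_abs, abs_of_pos hs0]
      rw [hnorm]
      have h3 : s * (1 + a / s - δ) ≤ s * ‖(a / s) • (a⁻¹ • u) + y‖ :=
        mul_le_mul_of_nonneg_left hc hs0.le
      have h4 : s * (1 + a / s - δ) = s + a - s * δ := by
        field_simp
      nlinarith
  have key : ∀ u : X, u ∈ E → ∀ s : ℝ, (1 - δ) * (‖u‖ + |s|) ≤ ‖u + s • y‖ := by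
    intro u hu s
    rcases le_total 0 s with hs | hs
    · rw [abs_of_nonneg hs]; exact keypos u hu s hs
    · have h1 : ‖u + s • y‖ = ‖(-u) + (-s) • y‖ := by
        rw [← norm_neg (u + s • y)]
        congr 1
        rw [neg_smul]
        abel
      rw [h1, abs_of_nonpos hs]
      have := keypos (-u) (E.neg_mem hu) (-s) (by linarith)
      rwa [norm_neg] at this
  -- y is not in E
  have hyE : y ∉ E := by
    intro hmem
    have := key (-y) (E.neg_mem hmem) 1
    simp only [one_smul, neg_add_cancel, norm_zero, norm_neg, hy1, abs_one] at this
    nlinarith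
  have hEc : IsClosed (E : Set X) := Submodule.closed_of_finiteDimensional E
  obtain ⟨h, hh0, hh1⟩ := aux_sep E hEc hyE
  refine ⟨y, hy1, ?_⟩
  intro γ hγ
  have hgex : ∀ i, ∃ g : X →L[ℝ] ℝ, ‖g‖ ≤ 1 + ε ∧ (∀ e ∈ E, g e = x' i e) ∧ g y = γ i := by
    intro i
    set G : X →L[ℝ] ℝ := x' i + (γ i - x' i y) • h with hG
    have hGE : ∀ e ∈ E, G e = x' i e := by
      intro e he
      simp [hG, hh0 e he]
    have hGy : G y = γ i := by
      simp [hG, hh1]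
    set F : Submodule ℝ X := E ⊔ (Submodule.span ℝ {y}) with hF
    set f : F →L[ℝ] ℝ := G.comp F.subtypeL with hf
    have hfbound : ‖f‖ ≤ 1 + ε := by
      apply ContinuousLinearMap.opNorm_le_bound _ (by linarith)
      rintro ⟨v, hv⟩
      obtain ⟨e, he, w, hw, hew⟩ := Submodule.mem_sup.mp hv
      obtain ⟨s, rfl⟩ := Submodule.mem_span_singleton.mp hw
      have hval : f ⟨v, hv⟩ = x' i e + s * γ i := by
        simp only [hf, ContinuousLinearMap.comp_apply, Submodule.subtypeL_apply, ← hew, hG,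
          ContinuousLinearMap.add_apply, ContinuousLinearMap.smul_apply, map_add,
          ContinuousLinearMap.map_smul]
        rw [hh0 e he, hh1]
        simp
        ring
      have hnv : ‖(⟨v, hv⟩ : F)‖ = ‖e + s • y‖ := by
        rw [Submodule.coe_norm]
        exact congrArg norm hew.symm
      rw [hval, Real.norm_eq_abs, hnv]
      have h1 : |x' i e + s * γ i| ≤ ‖e‖ + |s| * (1 + ε₀) := by
        calc |x' i e + s * γ i| ≤ |x' i e| + |s * γ i| := abs_add_le _ _
          _ ≤ ‖e‖ + |s| * (1 + ε₀) := by
              gcongr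
              · calc |x' i e| ≤ ‖x' i‖ * ‖e‖ := (x' i).le_opNorm e
                  _ ≤ 1 * ‖e‖ := mul_le_mul_of_nonneg_right (hx' i) (norm_nonneg e)
                  _ = ‖e‖ := one_mul _
              · rw [abs_mul]
                gcongr
                exact hγ i
      have h2 : ‖e‖ + |s| * (1 + ε₀) ≤ (1 + ε₀) * (‖e‖ + |s|) := by
        nlinarith [norm_nonneg e, abs_nonneg s]
      have h3 := key e he s
      calc |x' i e + s * γ i| ≤ (1 + ε₀) * (‖e‖ + |s|) := h1.trans h2
        _ = (1 + ε) * ((1 - δ) * (‖e‖ + |s|)) := by rw [← mul_assoc, hδε]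
        _ ≤ (1 + ε) * ‖e + s • y‖ := mul_le_mul_of_nonneg_left h3 (by linarith)
    obtain ⟨g, hgext, hgnorm⟩ := exists_extension_norm_eq F f
    refine ⟨g, hgnorm ▸ hfbound, ?_, ?_⟩
    · intro e he
      have heF : e ∈ F := Submodule.mem_sup_left he
      have := hgext ⟨e, heF⟩
      rw [this]
      exact hGE e he
    · have hyF : y ∈ F := Submodule.mem_sup_right (Submodule.mem_span_singleton_self y)
      have := hgext ⟨y, hyF⟩
      rw [this]
      exact hGy
  choose y'' hy'' using hgex
  exact ⟨y'', fun i => hy'' i⟩
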